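/- Let R = R_1 × R_2 where each R_i is an Artinian local ring with exactly t_i ≥ 2 proper ideals (including (0)), t_1 and t_2 even. Then EG(R) is overfull, i.e., |E(EG(R))| > ⌊|V(EG(R))|/2⌋ · Δ(EG(R)), if and only if t_1 = t_2 = 2. -/

import Mathlib

/-- An ideal is essential if it intersects every nonzero ideal nontrivially. -/
def IsEssentialIdeal (R : Type*) [CommRing R] (E : Ideal R) : Prop :=
  ∀ J : Ideal R, J ≠ ⊥ → E ⊓ J ≠ ⊥

/-- Vertices of the essential annihilating-ideal graph: nonzero ideals with
nonzero annihilator. -/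
def AnnVertex (R : Type*) [CommRing R] : Type _ :=
  {I : Ideal R // I ≠ ⊥ ∧ Submodule.annihilator I ≠ ⊥}

/-- The essential annihilating-ideal graph `EG(R)`. -/
def EG (R : Type*) [CommRing R] : SimpleGraph (AnnVertex R) where
  Adj I J := I ≠ J ∧ IsEssentialIdeal R (Submodule.annihilator (I.1 * J.1))
  symm := by
    constructor
    intro I J h
    refine ⟨h.1.symm, ?_⟩
    rw [mul_comm]
    exact h.2
  loopless := by constructor; intro I h; exact h.1 rfl

section PartA

variable {R : Type*} [CommRing R]

lemma mem_ann_iff {I : Ideal R} {x : R} :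
    x ∈ Submodule.annihilator I ↔ ∀ y ∈ I, x * y = 0 := by
  simp [Submodule.mem_annihilator, smul_eq_mul]

lemma ann_top_eq_bot : Submodule.annihilator (⊤ : Ideal R) = ⊥ := by
  ext x
  simp only [Submodule.mem_bot, mem_ann_iff]
  exact ⟨fun h => by simpa using h 1 trivial, fun h y _ => by simp [h]⟩

lemma ideal_mul_eq_top_iff {I J : Ideal R} : I * J = ⊤ ↔ I = ⊤ ∧ J = ⊤ := by
  constructor
  · intro h
    constructor
    · exact eq_top_iff.mpr (h ▸ Ideal.mul_le_left)
    · exact eq_top_iff.mpr (h ▸ Ideal.mul_le_right)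
  · rintro ⟨rfl, rfl⟩; simp

lemma ideal_bot_ne_top [Nontrivial R] : (⊥ : Ideal R) ≠ ⊤ := by
  intro h
  have h1 : (1 : R) ∈ (⊥ : Ideal R) := h ▸ Submodule.mem_top
  rw [Ideal.mem_bot] at h1
  exact one_ne_zero h1

lemma key_lemma {K J : Ideal R} (hK : IsNilpotent K) (hJ : J ≠ ⊥) :
    ∃ J' : Ideal R, J' ≠ ⊥ ∧ J' ≤ J ∧ K * J' = ⊥ := by
  obtain ⟨k, hk⟩ := hK
  have hP : ∃ j, K ^ j * J = ⊥ := ⟨k, by simp [hk]⟩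
  classical
  set j := Nat.find hP with hj
  have hjspec : K ^ j * J = ⊥ := Nat.find_spec hP
  have hj0 : j ≠ 0 := by
    intro h
    rw [h, pow_zero, one_mul] at hjspec
    exact hJ hjspec
  refine ⟨K ^ (j - 1) * J, ?_, Ideal.mul_le_right, ?_⟩
  · exact Nat.find_min hP (Nat.sub_lt (Nat.pos_of_ne_zero hj0) one_pos)
  · rw [← mul_assoc, ← pow_succ', Nat.sub_add_cancel (Nat.one_le_iff_ne_zero.mpr hj0)]
    exact hjspec

lemma ann_essential_of_nilpotent {K : Ideal R} (hK : IsNilpotent K) :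
    IsEssentialIdeal R (Submodule.annihilator K) := by
  intro J hJ
  obtain ⟨J', hJ'ne, hJ'le, hmul⟩ := key_lemma hK hJ
  intro h
  apply hJ'ne
  rw [← le_bot_iff, ← h]
  refine le_inf ?_ hJ'le
  intro x hx
  rw [mem_ann_iff]
  intro y hy
  have : y * x ∈ K * J' := Ideal.mul_mem_mul hy hx
  rw [hmul, Ideal.mem_bot] at this
  rw [mul_comm]; exact this

variable [IsArtinianRing R] [IsLocalRing R] [Nontrivial R]

lemma max_nilpotent : IsNilpotent (IsLocalRing.maximalIdeal R) := by
  rw [← IsLocalRing.jacobson_eq_maximalIdeal (⊥ : Ideal R) bot_ne_top]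
  exact IsArtinianRing.isNilpotent_jacobson_bot

lemma nilpotent_of_ne_top {K : Ideal R} (hK : K ≠ ⊤) : IsNilpotent K := by
  obtain ⟨k, hk⟩ := max_nilpotent (R := R)
  refine ⟨k, le_bot_iff.mp ?_⟩
  calc K ^ k ≤ IsLocalRing.maximalIdeal R ^ k :=
        pow_le_pow_left' (IsLocalRing.le_maximalIdeal hK) k
    _ = ⊥ := hk

lemma ann_essential_iff {K : Ideal R} :
    IsEssentialIdeal R (Submodule.annihilator K) ↔ K ≠ ⊤ := by
  constructor
  · rintro h rfl
    rw [ann_top_eq_bot] at h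
    exact h ⊤ top_ne_bot (by simp)
  · exact fun h => ann_essential_of_nilpotent (nilpotent_of_ne_top h)

lemma ann_ne_bot_iff {I : Ideal R} : Submodule.annihilator I ≠ ⊥ ↔ I ≠ ⊤ := by
  constructor
  · rintro h rfl; exact h ann_top_eq_bot
  · intro hI
    rcases eq_or_ne I ⊥ with rfl | hne
    · simp only [ne_eq, Submodule.annihilator_bot]; exact top_ne_bot
    · obtain ⟨J', hJ'ne, hJ'le, hmul⟩ := key_lemma (nilpotent_of_ne_top hI) hne
      intro h
      apply hJ'ne
      rw [← le_bot_iff, ← h]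
      intro x hx
      rw [mem_ann_iff]
      intro y hy
      have : y * x ∈ I * J' := Ideal.mul_mem_mul hy hx
      rw [hmul, Ideal.mem_bot] at this
      rw [mul_comm]; exact this

end PartA

section PartB

variable {R S : Type*} [CommRing R] [CommRing S]

lemma prod_bot_bot : Ideal.prod (⊥ : Ideal R) (⊥ : Ideal S) = ⊥ := by
  ext ⟨r, s⟩
  simp [Ideal.mem_prod, Prod.ext_iff]

lemma prod_eq_bot_iff {I : Ideal R} {J : Ideal S} :
    Ideal.prod I J = ⊥ ↔ I = ⊥ ∧ J = ⊥ := by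
  rw [← prod_bot_bot, Ideal.prod_inj]

lemma prod_eq_top_iff {I : Ideal R} {J : Ideal S} :
    Ideal.prod I J = ⊤ ↔ I = ⊤ ∧ J = ⊤ := by
  rw [← Ideal.prod_top_top, Ideal.prod_inj]

lemma prod_inf_prod (I₁ J₁ : Ideal R) (I₂ J₂ : Ideal S) :
    Ideal.prod I₁ I₂ ⊓ Ideal.prod J₁ J₂ = Ideal.prod (I₁ ⊓ J₁) (I₂ ⊓ J₂) := by
  ext ⟨r, s⟩
  simp only [Submodule.mem_inf, Ideal.mem_prod]
  tauto

lemma prod_mul_prod (I₁ J₁ : Ideal R) (I₂ J₂ : Ideal S) :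
    Ideal.prod I₁ I₂ * Ideal.prod J₁ J₂ = Ideal.prod (I₁ * J₁) (I₂ * J₂) := by
  apply le_antisymm
  · rw [Ideal.mul_le]
    rintro ⟨a₁, a₂⟩ ⟨ha₁, ha₂⟩ ⟨b₁, b₂⟩ ⟨hb₁, hb₂⟩
    exact ⟨Ideal.mul_mem_mul ha₁ hb₁, Ideal.mul_mem_mul ha₂ hb₂⟩
  · rintro ⟨r, s⟩ ⟨hr, hs⟩
    have h1 : ((r, 0) : R × S) ∈ Ideal.prod I₁ I₂ * Ideal.prod J₁ J₂ := by
      refine Submodule.mul_induction_on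
        (C := fun r => ((r, 0) : R × S) ∈ Ideal.prod I₁ I₂ * Ideal.prod J₁ J₂) hr ?_ ?_
      · intro a ha b hb
        have : ((a, 0) : R × S) * (b, 0) ∈ Ideal.prod I₁ I₂ * Ideal.prod J₁ J₂ :=
          Ideal.mul_mem_mul ⟨ha, I₂.zero_mem⟩ ⟨hb, J₂.zero_mem⟩
        simpa using this
      · intro x y hx hy
        have := Submodule.add_mem _ hx hy
        simpa using this
    have h2 : ((0, s) : R × S) ∈ Ideal.prod I₁ I₂ * Ideal.prod J₁ J₂ := by
      refine Submodule.mul_induction_on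
        (C := fun s => ((0, s) : R × S) ∈ Ideal.prod I₁ I₂ * Ideal.prod J₁ J₂) hs ?_ ?_
      · intro a ha b hb
        have : ((0, a) : R × S) * (0, b) ∈ Ideal.prod I₁ I₂ * Ideal.prod J₁ J₂ :=
          Ideal.mul_mem_mul ⟨I₁.zero_mem, ha⟩ ⟨J₁.zero_mem, hb⟩
        simpa using this
      · intro x y hx hy
        have := Submodule.add_mem _ hx hy
        simpa using this
    have := Submodule.add_mem _ h1 h2
    simpa using this

lemma ann_prod (I : Ideal R) (J : Ideal S) :
    Submodule.annihilator (Ideal.prod I J) =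
      Ideal.prod (Submodule.annihilator I) (Submodule.annihilator J) := by
  ext ⟨x₁, x₂⟩
  simp only [Ideal.mem_prod, mem_ann_iff]
  constructor
  · intro h
    constructor
    · intro y hy
      have := h (y, 0) ⟨hy, J.zero_mem⟩
      rw [Prod.ext_iff] at this
      simpa using this.1
    · intro y hy
      have := h (0, y) ⟨I.zero_mem, hy⟩
      rw [Prod.ext_iff] at this
      simpa using this.2
  · rintro ⟨h₁, h₂⟩ ⟨y₁, y₂⟩ ⟨hy₁, hy₂⟩
    exact Prod.ext (h₁ y₁ hy₁) (h₂ y₂ hy₂)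

lemma essential_prod_iff {E₁ : Ideal R} {E₂ : Ideal S} :
    IsEssentialIdeal (R × S) (Ideal.prod E₁ E₂) ↔
      IsEssentialIdeal R E₁ ∧ IsEssentialIdeal S E₂ := by
  constructor
  · intro h
    constructor
    · intro J hJ
      have := h (Ideal.prod J ⊥) (by rw [ne_eq, prod_eq_bot_iff]; tauto)
      rw [prod_inf_prod, ne_eq, prod_eq_bot_iff] at this
      simpa using this
    · intro J hJ
      have := h (Ideal.prod ⊥ J) (by rw [ne_eq, prod_eq_bot_iff]; tauto)
      rw [prod_inf_prod, ne_eq, prod_eq_bot_iff] at this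
      simpa using this
  · rintro ⟨h₁, h₂⟩ J hJ
    rw [Ideal.ideal_prod_eq J] at hJ ⊢
    rw [ne_eq, prod_eq_bot_iff, not_and_or] at hJ
    rw [prod_inf_prod, ne_eq, prod_eq_bot_iff, not_and_or]
    rcases hJ with h | h
    · exact Or.inl (h₁ _ h)
    · exact Or.inr (h₂ _ h)

end PartB

section Arith

lemma key_ineq {A B : ℤ} (hA : 2 ≤ A) (hB : 2 ≤ B) (h4 : 4 ≤ A ∨ 4 ≤ B) :
    A * B + 2 * A + 2 * B ≤ A * A + B * B + 2 := by
  rcases h4 with h | h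
  · nlinarith [sq_nonneg (2*B - A - 2), sq_nonneg (A - 4)]
  · nlinarith [sq_nonneg (2*A - B - 2), sq_nonneg (B - 4)]

lemma arith_helper (a b n m E S : ℕ) (ha : 2 ≤ a) (hb : 2 ≤ b)
    (hea : Even a) (heb : Even b)
    (hn : n + 1 = a * b + a + b) (hm : n = 2 * m + 1)
    (hE : 2 * E = S)
    (hS : S = b * (n - b) + a * (n - a) + (n - a - b) * (n - 1)) :
    (E > n / 2 * (n - 1)) ↔ (a = 2 ∧ b = 2) := by
  have hp : 4 ≤ a * b := by
    calc 4 = 2 * 2 := rfl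
    _ ≤ a * b := Nat.mul_le_mul ha hb
  have h1 : n - b = a * b + a - 1 := by omega
  have h2 : n - a = a * b + b - 1 := by omega
  have h3 : n - a - b = a * b - 1 := by omega
  have h4 : n - 1 = 2 * m := by omega
  have hm2 : n / 2 = m := by omega
  rw [h3, h1, h2, h4] at hS
  rw [hm2, h4]
  constructor
  · intro hgt
    by_contra hc
    push_neg at hc
    have h4' : 4 ≤ a ∨ 4 ≤ b := by
      rw [Nat.even_iff] at hea heb
      rcases Nat.eq_or_lt_of_le ha with h | h
      · right; have := hc h.symm; omega
      · left; omega
    have hSle : S ≤ 4 * (m * m) := by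
      zify [hp, ha, hb, show 1 ≤ a * b by omega, show 1 ≤ a * b + a by omega,
        show 1 ≤ a * b + b by omega] at hS hn ⊢
      have hM : 2 * (m : ℤ) = a * b + a + b - 2 := by omega
      have hkey := key_ineq (A := (a:ℤ)) (B := (b:ℤ)) (by exact_mod_cast ha)
        (by exact_mod_cast hb) (by exact_mod_cast h4')
      nlinarith [hkey, hM, hS]
    have : m * (2 * m) = 2 * (m * m) := by ring
    omega
  · rintro ⟨rfl, rfl⟩
    have hab : (2:ℕ) * 2 = 4 := rfl
    rw [hab] at hS hn
    have hm3 : m = 3 := by omega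
    subst hm3
    norm_num at hS ⊢
    omega

end Arith

section PartC

variable {R₁ R₂ : Type*} [CommRing R₁] [CommRing R₂]

/-- Basic consequences of the counting hypothesis. -/
lemma count_facts {t : ℕ} (ht : 2 ≤ t) (hc : {I : Ideal R₁ | I ≠ ⊤}.ncard = t) :
    Nontrivial R₁ ∧ Finite (Ideal R₁) ∧ Nat.card (Ideal R₁) = t + 1 ∧
      ∃ I : Ideal R₁, I ≠ ⊥ ∧ I ≠ ⊤ := by
  have hfin : {I : Ideal R₁ | I ≠ ⊤}.Finite := by
    by_contra h
    rw [Set.Infinite.ncard h] at hc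
    omega
  have hnt : Nontrivial R₁ := by
    by_contra h
    rw [not_nontrivial_iff_subsingleton] at h
    have : {I : Ideal R₁ | I ≠ ⊤} = ∅ := by
      ext I
      simp only [Set.mem_setOf_eq, Set.mem_empty_iff_false, iff_false, not_not]
      rw [Ideal.eq_top_iff_one]
      have : (1 : R₁) = 0 := Subsingleton.elim _ _
      rw [this]; exact I.zero_mem
    rw [this, Set.ncard_empty] at hc
    omega
  haveI := hnt
  have huniv : (Set.univ : Set (Ideal R₁)) = insert ⊤ {I : Ideal R₁ | I ≠ ⊤} := by
    ext I
    simp only [Set.mem_univ, Set.mem_insert_iff, Set.mem_setOf_eq, true_iff]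
    tauto
  have hfin2 : Finite (Ideal R₁) := by
    rw [← Set.finite_univ_iff, huniv]
    exact hfin.insert ⊤
  refine ⟨hnt, hfin2, ?_, ?_⟩
  · rw [← Set.ncard_univ, huniv, Set.ncard_insert_of_notMem (by simp) hfin, hc]
  · by_contra h
    push_neg at h
    have hsub : {I : Ideal R₁ | I ≠ ⊤} ⊆ {⊥} := by
      intro I hI
      rcases eq_or_ne I ⊥ with rfl | hne
      · simp
      · exact absurd (h I hne) (by simpa using hI)
    have := Set.ncard_le_ncard hsub (Set.finite_singleton _)
    rw [hc, Set.ncard_singleton] at this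
    omega

variable [IsArtinianRing R₁] [IsLocalRing R₁] [IsArtinianRing R₂] [IsLocalRing R₂]
  [Nontrivial R₁] [Nontrivial R₂]

lemma annP_ne_bot_iff (I₁ : Ideal R₁) (I₂ : Ideal R₂) :
    Submodule.annihilator (Ideal.prod I₁ I₂) ≠ ⊥ ↔ ¬(I₁ = ⊤ ∧ I₂ = ⊤) := by
  rw [ann_prod, ne_eq, prod_eq_bot_iff, not_and_or, ← ne_eq, ← ne_eq,
    ann_ne_bot_iff, ann_ne_bot_iff, not_and_or]

lemma annRS_ne_bot_iff (I : Ideal (R₁ × R₂)) :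
    Submodule.annihilator I ≠ ⊥ ↔ I ≠ ⊤ := by
  conv_lhs => rw [Ideal.ideal_prod_eq I]
  conv_rhs => rw [Ideal.ideal_prod_eq I]
  rw [annP_ne_bot_iff, ne_eq, prod_eq_top_iff]

/-- A vertex cannot have both components equal to `⊤`. -/
lemma vertex_not_both_top (v : AnnVertex (R₁ × R₂)) :
    ¬(Ideal.map (RingHom.fst R₁ R₂) v.1 = ⊤ ∧ Ideal.map (RingHom.snd R₁ R₂) v.1 = ⊤) := by
  intro ⟨h1, h2⟩
  apply v.2.2
  rw [Ideal.ideal_prod_eq v.1, h1, h2, Ideal.prod_top_top, ann_top_eq_bot]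

lemma EG_adj_iff (v w : AnnVertex (R₁ × R₂)) :
    (EG (R₁ × R₂)).Adj v w ↔ v ≠ w ∧
      ¬(Ideal.map (RingHom.fst R₁ R₂) v.1 = ⊤ ∧ Ideal.map (RingHom.fst R₁ R₂) w.1 = ⊤) ∧
      ¬(Ideal.map (RingHom.snd R₁ R₂) v.1 = ⊤ ∧ Ideal.map (RingHom.snd R₁ R₂) w.1 = ⊤) := by
  have hmul : v.1 * w.1 =
      Ideal.prod (Ideal.map (RingHom.fst R₁ R₂) v.1 * Ideal.map (RingHom.fst R₁ R₂) w.1)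
        (Ideal.map (RingHom.snd R₁ R₂) v.1 * Ideal.map (RingHom.snd R₁ R₂) w.1) := by
    conv_lhs => rw [Ideal.ideal_prod_eq v.1, Ideal.ideal_prod_eq w.1]
    rw [prod_mul_prod]
  show (v ≠ w ∧ IsEssentialIdeal _ (Submodule.annihilator (v.1 * w.1))) ↔ _
  rw [hmul, ann_prod, essential_prod_iff, ann_essential_iff, ann_essential_iff]
  simp only [ne_eq, ideal_mul_eq_top_iff]


lemma nbhd_C (v : AnnVertex (R₁ × R₂)) (h1 : Ideal.map (RingHom.fst R₁ R₂) v.1 ≠ ⊤)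
    (h2 : Ideal.map (RingHom.snd R₁ R₂) v.1 ≠ ⊤) :
    (EG (R₁ × R₂)).neighborSet v = {v}ᶜ := by
  ext w
  simp only [SimpleGraph.mem_neighborSet, EG_adj_iff, Set.mem_compl_iff,
    Set.mem_singleton_iff]
  constructor
  · rintro ⟨h, -, -⟩ rfl; exact h rfl
  · intro h
    exact ⟨fun h' => h h'.symm, fun h' => h1 h'.1, fun h' => h2 h'.1⟩

lemma nbhd_A (v : AnnVertex (R₁ × R₂)) (h1 : Ideal.map (RingHom.fst R₁ R₂) v.1 = ⊤) :
    (EG (R₁ × R₂)).neighborSet v =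
      {w : AnnVertex (R₁ × R₂) | Ideal.map (RingHom.fst R₁ R₂) w.1 = ⊤}ᶜ := by
  have h2 : Ideal.map (RingHom.snd R₁ R₂) v.1 ≠ ⊤ :=
    fun h => vertex_not_both_top v ⟨h1, h⟩
  ext w
  simp only [SimpleGraph.mem_neighborSet, EG_adj_iff, Set.mem_compl_iff, Set.mem_setOf_eq]
  constructor
  · rintro ⟨-, hf, -⟩ hw; exact hf ⟨h1, hw⟩
  · intro hw
    refine ⟨fun h => hw (h ▸ h1), fun h => hw h.2, fun h => h2 h.1⟩

lemma nbhd_B (v : AnnVertex (R₁ × R₂)) (h1 : Ideal.map (RingHom.snd R₁ R₂) v.1 = ⊤) :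
    (EG (R₁ × R₂)).neighborSet v =
      {w : AnnVertex (R₁ × R₂) | Ideal.map (RingHom.snd R₁ R₂) w.1 = ⊤}ᶜ := by
  have h2 : Ideal.map (RingHom.fst R₁ R₂) v.1 ≠ ⊤ :=
    fun h => vertex_not_both_top v ⟨h, h1⟩
  ext w
  simp only [SimpleGraph.mem_neighborSet, EG_adj_iff, Set.mem_compl_iff, Set.mem_setOf_eq]
  constructor
  · rintro ⟨-, -, hf⟩ hw; exact hf ⟨h1, hw⟩
  · intro hw
    refine ⟨fun h => hw (h ▸ h1), fun h => h2 h.1, fun h => hw h.2⟩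

/-- Vertices with first component `⊤` correspond to proper ideals of `R₂`. -/
noncomputable def eA : {v : AnnVertex (R₁ × R₂) // Ideal.map (RingHom.fst R₁ R₂) v.1 = ⊤} ≃
    {I : Ideal R₂ // I ≠ ⊤} where
  toFun v := ⟨Ideal.map (RingHom.snd R₁ R₂) v.1.1,
    fun h => vertex_not_both_top v.1 ⟨v.2, h⟩⟩
  invFun I := ⟨⟨Ideal.prod ⊤ I.1,
    by rw [ne_eq, prod_eq_bot_iff]; exact fun h => ideal_bot_ne_top h.1.symm,
    by rw [annP_ne_bot_iff]; exact fun h => I.2 h.2⟩, Ideal.map_fst_prod _ _⟩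
  left_inv v := by
    apply Subtype.ext; apply Subtype.ext
    show Ideal.prod ⊤ (Ideal.map (RingHom.snd R₁ R₂) v.1.1) = v.1.1
    conv_rhs => rw [Ideal.ideal_prod_eq v.1.1]
    rw [v.2]
  right_inv I := Subtype.ext (Ideal.map_snd_prod _ _)

/-- Vertices with second component `⊤` correspond to proper ideals of `R₁`. -/
noncomputable def eB : {v : AnnVertex (R₁ × R₂) // Ideal.map (RingHom.snd R₁ R₂) v.1 = ⊤} ≃
    {I : Ideal R₁ // I ≠ ⊤} where
  toFun v := ⟨Ideal.map (RingHom.fst R₁ R₂) v.1.1,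
    fun h => vertex_not_both_top v.1 ⟨h, v.2⟩⟩
  invFun I := ⟨⟨Ideal.prod I.1 ⊤,
    by rw [ne_eq, prod_eq_bot_iff]; exact fun h => ideal_bot_ne_top h.2.symm,
    by rw [annP_ne_bot_iff]; exact fun h => I.2 h.1⟩, Ideal.map_snd_prod _ _⟩
  left_inv v := by
    apply Subtype.ext; apply Subtype.ext
    show Ideal.prod (Ideal.map (RingHom.fst R₁ R₂) v.1.1) ⊤ = v.1.1
    conv_rhs => rw [Ideal.ideal_prod_eq v.1.1]
    rw [v.2]
  right_inv I := Subtype.ext (Ideal.map_fst_prod _ _)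

/-- Vertices correspond to pairs of ideals avoiding `(⊥,⊥)` and `(⊤,⊤)`. -/
noncomputable def eV : AnnVertex (R₁ × R₂) ≃
    {p : Ideal R₁ × Ideal R₂ // p ≠ (⊥, ⊥) ∧ p ≠ (⊤, ⊤)} :=
  (Equiv.subtypeEquivRight (fun I => and_congr_right fun _ =>
    (annRS_ne_bot_iff I))).trans <|
  (Ideal.idealProdEquiv.subtypeEquiv (fun I => by
    have hbot : Ideal.idealProdEquiv (⊥ : Ideal (R₁ × R₂)) = ((⊥ : Ideal R₁), (⊥ : Ideal R₂)) := by
      have : (⊥ : Ideal (R₁ × R₂)) = Ideal.prod ⊥ ⊥ := prod_bot_bot.symm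
      rw [this]
      exact Prod.ext (Ideal.map_fst_prod _ _) (Ideal.map_snd_prod _ _)
    have htop : Ideal.idealProdEquiv (⊤ : Ideal (R₁ × R₂)) = ((⊤ : Ideal R₁), (⊤ : Ideal R₂)) := by
      have : (⊤ : Ideal (R₁ × R₂)) = Ideal.prod ⊤ ⊤ := Ideal.prod_top_top.symm
      rw [this]
      exact Prod.ext (Ideal.map_fst_prod _ _) (Ideal.map_snd_prod _ _)
    rw [← hbot, ← htop]
    simp only [ne_eq, OrderIso.coe_toEquiv, EmbeddingLike.apply_eq_iff_eq]))

end PartC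
theorem overfull_iff_two_two (R₁ R₂ : Type*) [CommRing R₁] [CommRing R₂]
    [IsArtinianRing R₁] [IsLocalRing R₁] [IsArtinianRing R₂] [IsLocalRing R₂]
    (t₁ t₂ : ℕ) (ht₁ : 2 ≤ t₁) (ht₂ : 2 ≤ t₂) (he₁ : Even t₁) (he₂ : Even t₂)
    (hc₁ : {I : Ideal R₁ | I ≠ ⊤}.ncard = t₁)
    (hc₂ : {I : Ideal R₂ | I ≠ ⊤}.ncard = t₂)
    (d : ℕ)
    (hdle : ∀ v : AnnVertex (R₁ × R₂), ((EG (R₁ × R₂)).neighborSet v).ncard ≤ d)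
    (hdeq : ∃ v : AnnVertex (R₁ × R₂), ((EG (R₁ × R₂)).neighborSet v).ncard = d) :
    ((EG (R₁ × R₂)).edgeSet.ncard >
        (Set.univ : Set (AnnVertex (R₁ × R₂))).ncard / 2 * d) ↔
      (t₁ = 2 ∧ t₂ = 2) := by
  classical
  obtain ⟨hnt₁, hfin₁, hcard₁, I₁0, hI₁b, hI₁t⟩ := count_facts ht₁ hc₁
  obtain ⟨hnt₂, hfin₂, hcard₂, -⟩ := count_facts ht₂ hc₂
  haveI := hnt₁; haveI := hnt₂; haveI := hfin₁; haveI := hfin₂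
  haveI : Finite (Ideal (R₁ × R₂)) := Finite.of_equiv _ Ideal.idealProdEquiv.symm.toEquiv
  haveI : Finite (AnnVertex (R₁ × R₂)) := by unfold AnnVertex; exact Subtype.finite
  haveI : Fintype (AnnVertex (R₁ × R₂)) := Fintype.ofFinite _
  set n := Nat.card (AnnVertex (R₁ × R₂)) with hndef
  -- total count
  have hbt : ((⊥, ⊥) : Ideal R₁ × Ideal R₂) ≠ (⊤, ⊤) := by
    intro h
    exact ideal_bot_ne_top (congrArg Prod.fst h)
  have hncard : n = (t₁ + 1) * (t₂ + 1) - 2 := by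
    have h1 : n = Nat.card {p : Ideal R₁ × Ideal R₂ // p ≠ (⊥, ⊥) ∧ p ≠ (⊤, ⊤)} :=
      Nat.card_congr eV
    have h2 : Nat.card {p : Ideal R₁ × Ideal R₂ // p ≠ (⊥, ⊥) ∧ p ≠ (⊤, ⊤)} =
        (({(⊥, ⊥), (⊤, ⊤)} : Set (Ideal R₁ × Ideal R₂))ᶜ).ncard := by
      rw [← Nat.card_coe_set_eq]
      exact Nat.card_congr (Equiv.subtypeEquivRight (fun p => by
        simp only [Set.mem_compl_iff, Set.mem_insert_iff, Set.mem_singleton_iff, not_or]))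
    have h3 : ({(⊥, ⊥), (⊤, ⊤)} : Set (Ideal R₁ × Ideal R₂)).ncard +
        (({(⊥, ⊥), (⊤, ⊤)} : Set (Ideal R₁ × Ideal R₂))ᶜ).ncard =
        Nat.card (Ideal R₁ × Ideal R₂) := Set.ncard_add_ncard_compl _
    rw [Set.ncard_pair hbt, Nat.card_prod, hcard₁, hcard₂] at h3
    omega
  have hn9 : 9 ≤ (t₁ + 1) * (t₂ + 1) := by
    calc (9:ℕ) = 3 * 3 := by norm_num
    _ ≤ (t₁ + 1) * (t₂ + 1) := Nat.mul_le_mul (by omega) (by omega)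
  have hn7 : 7 ≤ n := by omega
  -- part cardinalities
  have hcA : {v : AnnVertex (R₁ × R₂) |
      Ideal.map (RingHom.fst R₁ R₂) v.1 = ⊤}.ncard = t₂ := by
    have h1 : Nat.card {I : Ideal R₂ // I ≠ ⊤} = t₂ := by
      rw [← hc₂, ← Nat.card_coe_set_eq]; rfl
    exact (Nat.card_coe_set_eq _).symm.trans
      ((Nat.card_congr (eA (R₁ := R₁) (R₂ := R₂))).trans h1)
  have hcB : {v : AnnVertex (R₁ × R₂) |
      Ideal.map (RingHom.snd R₁ R₂) v.1 = ⊤}.ncard = t₁ := by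
    have h1 : Nat.card {I : Ideal R₁ // I ≠ ⊤} = t₁ := by
      rw [← hc₁, ← Nat.card_coe_set_eq]; rfl
    exact (Nat.card_coe_set_eq _).symm.trans
      ((Nat.card_congr (eB (R₁ := R₁) (R₂ := R₂))).trans h1)
  -- degree values
  have hdegC : ∀ v : AnnVertex (R₁ × R₂), Ideal.map (RingHom.fst R₁ R₂) v.1 ≠ ⊤ →
      Ideal.map (RingHom.snd R₁ R₂) v.1 ≠ ⊤ →
      ((EG (R₁ × R₂)).neighborSet v).ncard = n - 1 := by
    intro v h1 h2
    rw [nbhd_C v h1 h2]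
    have := Set.ncard_add_ncard_compl ({v} : Set (AnnVertex (R₁ × R₂)))
    rw [Set.ncard_singleton] at this
    omega
  have hdegA : ∀ v : AnnVertex (R₁ × R₂), Ideal.map (RingHom.fst R₁ R₂) v.1 = ⊤ →
      ((EG (R₁ × R₂)).neighborSet v).ncard = n - t₂ := by
    intro v h1
    rw [nbhd_A v h1]
    have := Set.ncard_add_ncard_compl
      {v : AnnVertex (R₁ × R₂) | Ideal.map (RingHom.fst R₁ R₂) v.1 = ⊤}
    rw [hcA] at this
    omega
  have hdegB : ∀ v : AnnVertex (R₁ × R₂), Ideal.map (RingHom.snd R₁ R₂) v.1 = ⊤ →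
      ((EG (R₁ × R₂)).neighborSet v).ncard = n - t₁ := by
    intro v h1
    rw [nbhd_B v h1]
    have := Set.ncard_add_ncard_compl
      {v : AnnVertex (R₁ × R₂) | Ideal.map (RingHom.snd R₁ R₂) v.1 = ⊤}
    rw [hcB] at this
    omega
  -- the maximal degree
  have hdle' : ∀ v : AnnVertex (R₁ × R₂), ((EG (R₁ × R₂)).neighborSet v).ncard ≤ n - 1 := by
    intro v
    have hsub : (EG (R₁ × R₂)).neighborSet v ⊆ {v}ᶜ := by
      intro w hw
      simp only [Set.mem_compl_iff, Set.mem_singleton_iff]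
      rintro rfl
      exact (EG (R₁ × R₂)).loopless.irrefl _ hw
    have h1 := Set.ncard_le_ncard hsub (Set.toFinite _)
    have := Set.ncard_add_ncard_compl ({v} : Set (AnnVertex (R₁ × R₂)))
    rw [Set.ncard_singleton] at this
    omega
  have hd : d = n - 1 := by
    refine le_antisymm ?_ ?_
    · obtain ⟨v, hv⟩ := hdeq
      rw [← hv]; exact hdle' v
    · obtain ⟨v₀, hv₀⟩ : ∃ v₀ : AnnVertex (R₁ × R₂), v₀.1 = Ideal.prod I₁0 ⊥ :=
        ⟨⟨Ideal.prod I₁0 ⊥,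
          by rw [ne_eq, prod_eq_bot_iff]; exact fun h => hI₁b h.1,
          by rw [annP_ne_bot_iff]; exact fun h => hI₁t h.1⟩, rfl⟩
      have := hdegC v₀
        (by rw [hv₀, Ideal.map_fst_prod]; exact hI₁t)
        (by rw [hv₀, Ideal.map_snd_prod]; exact ideal_bot_ne_top)
      rw [← this]
      exact hdle v₀
  -- degree = ncard of neighbor set
  have hdeg_eq : ∀ v : AnnVertex (R₁ × R₂),
      (EG (R₁ × R₂)).degree v = ((EG (R₁ × R₂)).neighborSet v).ncard := by
    intro v
    rw [← SimpleGraph.card_neighborSet_eq_degree, ← Nat.card_coe_set_eq,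
      Nat.card_eq_fintype_card]
  -- the handshake computation
  set pA := fun v : AnnVertex (R₁ × R₂) => Ideal.map (RingHom.fst R₁ R₂) v.1 = ⊤ with hpA
  set pB := fun v : AnnVertex (R₁ × R₂) => Ideal.map (RingHom.snd R₁ R₂) v.1 = ⊤ with hpB
  have c1 : (Finset.univ.filter pA).card = t₂ := by
    rw [← Fintype.card_subtype, ← Nat.card_eq_fintype_card]
    exact (Nat.card_coe_set_eq _).trans hcA
  have c2' : (Finset.univ.filter pB).card = t₁ := by
    rw [← Fintype.card_subtype, ← Nat.card_eq_fintype_card]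
    exact (Nat.card_coe_set_eq _).trans hcB
  have c2 : ((Finset.univ.filter (fun v => ¬ pA v)).filter pB).card = t₁ := by
    have hfeq : Finset.filter (fun a => ¬ pA a ∧ pB a) Finset.univ =
        Finset.filter pB Finset.univ := by
      ext x
      simp only [Finset.mem_filter, Finset.mem_univ, true_and]
      exact ⟨And.right, fun h => ⟨fun h' => vertex_not_both_top x ⟨h', h⟩, h⟩⟩
    rw [Finset.filter_filter, hfeq]
    exact c2'
  have ctot : (Finset.univ.filter pA).card + (Finset.univ.filter (fun v => ¬ pA v)).card =
      n := by
    rw [Finset.card_filter_add_card_filter_not, Finset.card_univ]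
    exact Nat.card_eq_fintype_card.symm
  have ctot2 : ((Finset.univ.filter (fun v => ¬ pA v)).filter pB).card +
      ((Finset.univ.filter (fun v => ¬ pA v)).filter (fun v => ¬ pB v)).card =
      (Finset.univ.filter (fun v => ¬ pA v)).card :=
    Finset.card_filter_add_card_filter_not pB
  have c3 : ((Finset.univ.filter (fun v => ¬ pA v)).filter (fun v => ¬ pB v)).card =
      n - t₂ - t₁ := by omega
  have hsum : ∑ v, (EG (R₁ × R₂)).degree v =
      t₂ * (n - t₂) + t₁ * (n - t₁) + (n - t₂ - t₁) * (n - 1) := by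
    rw [← Finset.sum_filter_add_sum_filter_not Finset.univ pA
        (fun v => (EG (R₁ × R₂)).degree v),
      ← Finset.sum_filter_add_sum_filter_not (Finset.univ.filter (fun v => ¬ pA v)) pB
        (fun v => (EG (R₁ × R₂)).degree v)]
    have e1 : ∑ v ∈ Finset.univ.filter pA, (EG (R₁ × R₂)).degree v = t₂ * (n - t₂) := by
      rw [Finset.sum_congr rfl (fun v hv => by
        rw [hdeg_eq, hdegA v (Finset.mem_filter.mp hv).2]), Finset.sum_const, c1,
        smul_eq_mul]
    have e2 : ∑ v ∈ (Finset.univ.filter (fun v => ¬ pA v)).filter pB,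
        (EG (R₁ × R₂)).degree v = t₁ * (n - t₁) := by
      rw [Finset.sum_congr rfl (fun v hv => by
        rw [hdeg_eq, hdegB v (Finset.mem_filter.mp hv).2]), Finset.sum_const, c2,
        smul_eq_mul]
    have e3 : ∑ v ∈ (Finset.univ.filter (fun v => ¬ pA v)).filter (fun v => ¬ pB v),
        (EG (R₁ × R₂)).degree v = (n - t₂ - t₁) * (n - 1) := by
      rw [Finset.sum_congr rfl (fun v hv => by
        have hv' := Finset.mem_filter.mp hv
        have hv'' := Finset.mem_filter.mp hv'.1
        rw [hdeg_eq, hdegC v hv''.2 hv'.2]), Finset.sum_const, c3, smul_eq_mul]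
    rw [e1, e2, e3]
    ring
  -- edge count
  set E := (EG (R₁ × R₂)).edgeFinset.card with hEdef
  have hhand : 2 * E = t₂ * (n - t₂) + t₁ * (n - t₁) + (n - t₂ - t₁) * (n - 1) := by
    rw [← hsum, SimpleGraph.sum_degrees_eq_twice_card_edges]
  have hEset : (EG (R₁ × R₂)).edgeSet.ncard = E := by
    rw [hEdef, SimpleGraph.edgeFinset_card, ← Nat.card_eq_fintype_card]
    exact (Nat.card_coe_set_eq _).symm
  -- arithmetic conclusion
  have hexp : (t₁ + 1) * (t₂ + 1) = t₁ * t₂ + t₁ + t₂ + 1 := by ring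
  have hn' : n + 1 = t₁ * t₂ + t₁ + t₂ := by omega
  have hevens : (t₁ * t₂) % 2 = 0 := Nat.even_iff.mp (he₁.mul_right t₂)
  have he₁' := Nat.even_iff.mp he₁
  have he₂' := Nat.even_iff.mp he₂
  have hm : n = 2 * (n / 2) + 1 := by omega
  have hS' : t₂ * (n - t₂) + t₁ * (n - t₁) + (n - t₂ - t₁) * (n - 1) =
      t₂ * (n - t₂) + t₁ * (n - t₁) + (n - t₁ - t₂) * (n - 1) := by
    congr 2
    omega
  rw [hEset, Set.ncard_univ, ← hndef, hd]
  exact arith_helper t₁ t₂ n (n / 2) E _ ht₁ ht₂ he₁ he₂ hn' hm hhand hS'
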